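/- For all positive integers n, (2n+3) divides 3·S_n, where S_n = C(6n,3n)·C(3n,n)/(2(2n+1)·C(2n,n)). -/

import Mathlib

def S (n : ℕ) : ℕ :=
  Nat.choose (6 * n) (3 * n) * Nat.choose (3 * n) n / (2 * (2 * n + 1) * Nat.choose (2 * n) n)

open Nat Finset

-- ⌊3x⌋ + 2⌊2x⌋ ≤ ⌊6x⌋ + ⌊x⌋
private lemma base_ineq (n q : ℕ) (hq : 0 < q) : 3*n/q + 2*(2*n/q) ≤ 6*n/q + n/q := by
  have h : q * (n / q) + n % q = n := Nat.div_add_mod n q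
  have hr : n % q < q := Nat.mod_lt _ hq
  set s := n / q with hs
  set r := n % q with hrr
  have h1 : 3*n/q = 3*s + 3*r/q := by rw [show 3*n = q*(3*s) + 3*r by rw [← h]; ring, Nat.mul_add_div hq]
  have h2 : 2*n/q = 2*s + 2*r/q := by rw [show 2*n = q*(2*s) + 2*r by rw [← h]; ring, Nat.mul_add_div hq]
  have h3 : 6*n/q = 6*s + 6*r/q := by rw [show 6*n = q*(6*s) + 6*r by rw [← h]; ring, Nat.mul_add_div hq]

  rw [h1, h2, h3]
  have hA : 3*r/q ≤ 2 := by
    have := Nat.div_lt_of_lt_mul (show 3*r < q*3 by omega)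
    omega
  have hB : 2*r/q ≤ 1 := by
    have := Nat.div_lt_of_lt_mul (show 2*r < q*2 by omega)
    omega
  have hC1 : 2*(3*r/q) ≤ 6*r/q := by
    have := Nat.mul_div_le_mul_div_assoc 2 (3*r) q
    rw [show 2*(3*r) = 6*r by ring] at this
    exact this
  have hC2 : 3*(2*r/q) ≤ 6*r/q := by
    have := Nat.mul_div_le_mul_div_assoc 3 (2*r) q
    rw [show 3*(2*r) = 6*r by ring] at this
    exact this
  omega

private lemma two_r_eq (q r c : ℕ) (hc : c % 2 = 1) (hcq : c + 2*r < 3*q) (hd : q ∣ 2*r + c) : 2*r + c = q := by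
  obtain ⟨k, hk⟩ := hd
  have hk2 : k < 3 := Nat.lt_of_mul_lt_mul_left (a := q) (by omega)
  interval_cases k <;> omega

private lemma gain_odd1 (n q : ℕ) (hodd : q % 2 = 1) (h3 : 3 ≤ q) (hd : q ∣ 2*n+1) :
    3*n/q + 2*(2*n/q) + 1 ≤ 6*n/q + n/q := by
  have hq : 0 < q := by omega
  have h : q * (n / q) + n % q = n := Nat.div_add_mod n q
  have hr : n % q < q := Nat.mod_lt _ hq
  set s := n / q with hs
  set r := n % q with hrr
  have h1 : 3*n/q = 3*s + 3*r/q := by rw [show 3*n = q*(3*s) + 3*r by rw [← h]; ring, Nat.mul_add_div hq]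
  have h2 : 2*n/q = 2*s + 2*r/q := by rw [show 2*n = q*(2*s) + 2*r by rw [← h]; ring, Nat.mul_add_div hq]
  have h3' : 6*n/q = 6*s + 6*r/q := by rw [show 6*n = q*(6*s) + 6*r by rw [← h]; ring, Nat.mul_add_div hq]
  have hqd : q ∣ 2*r+1 := (Nat.dvd_add_right ⟨2*s, rfl⟩).mp
    (by rw [show q*(2*s) + (2*r+1) = 2*n+1 by rw [← h]; ring]; exact hd)
  have hq1 : 2*r + 1 = q := two_r_eq q r 1 (by norm_num) (by omega) hqd
  have e2 : 2*r/q = 0 := Nat.div_eq_of_lt (by omega)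
  have e3 : 3*r/q = 1 := Nat.div_eq_of_lt_le (by omega) (by omega)
  have e6 : 6*r/q = 2 := Nat.div_eq_of_lt_le (by omega) (by omega)
  rw [h1, h2, h3', e2, e3, e6]; omega

private lemma gain_odd3 (n q : ℕ) (hodd : q % 2 = 1) (h5 : 5 ≤ q) (hd : q ∣ 2*n+3) :
    3*n/q + 2*(2*n/q) + 1 ≤ 6*n/q + n/q := by
  have hq : 0 < q := by omega
  have h : q * (n / q) + n % q = n := Nat.div_add_mod n q
  have hr : n % q < q := Nat.mod_lt _ hq
  set s := n / q with hs
  set r := n % q with hrr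
  have h1 : 3*n/q = 3*s + 3*r/q := by rw [show 3*n = q*(3*s) + 3*r by rw [← h]; ring, Nat.mul_add_div hq]
  have h2 : 2*n/q = 2*s + 2*r/q := by rw [show 2*n = q*(2*s) + 2*r by rw [← h]; ring, Nat.mul_add_div hq]
  have h3' : 6*n/q = 6*s + 6*r/q := by rw [show 6*n = q*(6*s) + 6*r by rw [← h]; ring, Nat.mul_add_div hq]
  have hqd : q ∣ 2*r+3 := (Nat.dvd_add_right ⟨2*s, rfl⟩).mp
    (by rw [show q*(2*s) + (2*r+3) = 2*n+3 by rw [← h]; ring]; exact hd)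
  have hq1 : 2*r + 3 = q := two_r_eq q r 3 (by norm_num) (by omega) hqd
  have e2 : 2*r/q = 0 := Nat.div_eq_of_lt (by omega)
  rcases le_or_gt r 2 with hcase | hcase
  · have e3 : 3*r/q = 0 := Nat.div_eq_of_lt (by omega)
    have e6 : 6*r/q = 1 := Nat.div_eq_of_lt_le (by omega) (by omega)
    rw [h1, h2, h3', e2, e3, e6]; omega
  · have e3 : 3*r/q = 1 := Nat.div_eq_of_lt_le (by omega) (by omega)
    have e6 : 6*r/q = 2 := Nat.div_eq_of_lt_le (by omega) (by omega)
    rw [h1, h2, h3', e2, e3, e6]; omega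

private lemma gain_two (n t : ℕ) (ht : t ≤ n) (h2n : 2*n < 4*t) :
    3*n/(4*t) + 2*(2*n/(4*t)) + 1 ≤ 6*n/(4*t) + n/(4*t) := by
  have ht0 : 0 < t := by omega
  have e2 : 2*n/(4*t) = 0 := Nat.div_eq_of_lt (by omega)
  have en : n/(4*t) = 0 := Nat.div_eq_of_lt (by omega)
  rw [e2, en]
  rcases le_or_gt (4*t) (3*n) with hcase | hcase
  · have e3 : 3*n/(4*t) = 1 := Nat.div_eq_of_lt_le (by omega) (by omega)
    have e6 : 2 ≤ 6*n/(4*t) := (Nat.le_div_iff_mul_le (by omega)).mpr (by omega)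
    rw [e3]; omega
  · have e3 : 3*n/(4*t) = 0 := Nat.div_eq_of_lt (by omega)
    have e6 : 1 ≤ 6*n/(4*t) := (Nat.le_div_iff_mul_le (by omega)).mpr (by omega)
    rw [e3]; omega

private lemma sum_gain {F G : ℕ → ℕ} {b lo hi : ℕ} (h1 : 1 ≤ lo) (h2 : lo ≤ hi) (h3 : hi ≤ b)
    (hall : ∀ i, 1 ≤ i → i < b → G i ≤ F i)
    (hgain : ∀ i, lo ≤ i → i < hi → G i + 1 ≤ F i) :
    (∑ i ∈ Finset.Ico 1 b, G i) + (hi - lo) ≤ ∑ i ∈ Finset.Ico 1 b, F i := by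
  rw [← Finset.sum_Ico_consecutive G (h1.trans h2) h3, ← Finset.sum_Ico_consecutive F (h1.trans h2) h3,
      ← Finset.sum_Ico_consecutive G h1 h2, ← Finset.sum_Ico_consecutive F h1 h2]
  have A1 : ∑ i ∈ Finset.Ico 1 lo, G i ≤ ∑ i ∈ Finset.Ico 1 lo, F i := by
    apply Finset.sum_le_sum
    intro i hi'
    rw [Finset.mem_Ico] at hi'
    exact hall i hi'.1 (by omega)
  have A3 : ∑ i ∈ Finset.Ico hi b, G i ≤ ∑ i ∈ Finset.Ico hi b, F i := by
    apply Finset.sum_le_sum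
    intro i hi'
    rw [Finset.mem_Ico] at hi'
    exact hall i (by omega) hi'.2
  have A2 : (∑ i ∈ Finset.Ico lo hi, G i) + (hi - lo) ≤ ∑ i ∈ Finset.Ico lo hi, F i := by
    have := Finset.sum_le_sum (f := fun i => G i + 1) (g := F) (s := Finset.Ico lo hi) ?_
    · rw [Finset.sum_add_distrib, Finset.sum_const, Nat.card_Ico, smul_eq_mul, mul_one] at this
      exact this
    · intro i hi'
      rw [Finset.mem_Ico] at hi'
      exact hgain i hi'.1 hi'.2
  omega

private lemma legendre_sum {p : ℕ} (hp : p.Prime) (n m : ℕ) (hm : m ≤ 6*n) :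
    (m !).factorization p = ∑ i ∈ Finset.Ico 1 (6*n+1), m / p ^ i := by
  haveI := Fact.mk hp
  rw [Nat.factorization_def _ hp]
  exact padicValNat_factorial (by calc Nat.log p m ≤ m := Nat.log_le_self p m
                                    _ < 6*n+1 := by omega)

private lemma fac_apply_mul {a b : ℕ} (ha : a ≠ 0) (hb : b ≠ 0) (p : ℕ) :
    (a*b).factorization p = a.factorization p + b.factorization p := by
  rw [Nat.factorization_mul ha hb]; rfl

private lemma fac_le (p m : ℕ) (hp : p.Prime) (hm : m ≠ 0) : m.factorization p ≤ m := by
  have h1 : p ^ m.factorization p ∣ m := Nat.ordProj_dvd m p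
  have h2 : p ^ m.factorization p ≤ m := Nat.le_of_dvd (Nat.pos_of_ne_zero hm) h1
  have h3 : m.factorization p < p ^ m.factorization p := Nat.lt_pow_self hp.one_lt
  omega

private lemma pow_dvd_of_le_fac {p m i : ℕ} (hp : p.Prime) (hm : m ≠ 0) (hi : i ≤ m.factorization p) :
    p ^ i ∣ m := (Nat.Prime.pow_dvd_iff_le_factorization hp hm).mpr hi

private lemma odd_pow_mod (p i : ℕ) (hodd : p % 2 = 1) : p ^ i % 2 = 1 := by
  simp [Nat.pow_mod, hodd]

private lemma per_primeA (p n : ℕ) (hp : p.Prime) (hn : 0 < n) :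
    (2*(2*n+1)*(2*n+3)).factorization p + ((3*n)!).factorization p
      + (((2*n)!).factorization p + ((2*n)!).factorization p)
    ≤ (3:ℕ).factorization p + (((6*n)!).factorization p + (n !).factorization p) := by
  rw [legendre_sum hp n (3*n) (by omega), legendre_sum hp n (2*n) (by omega),
      legendre_sum hp n (6*n) (by omega), legendre_sum hp n n (by omega)]
  set b := 6*n+1 with hb
  set G : ℕ → ℕ := fun i => 3*n/p^i + (2*n/p^i + 2*n/p^i) with hG
  set F : ℕ → ℕ := fun i => 6*n/p^i + n/p^i with hF
  have hsum1 : ∑ i ∈ Finset.Ico 1 b, G i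
      = (∑ i ∈ Finset.Ico 1 b, 3*n/p^i) + ((∑ i ∈ Finset.Ico 1 b, 2*n/p^i) + (∑ i ∈ Finset.Ico 1 b, 2*n/p^i)) := by
    simp only [hG, Finset.sum_add_distrib]
  have hsum2 : ∑ i ∈ Finset.Ico 1 b, F i
      = (∑ i ∈ Finset.Ico 1 b, 6*n/p^i) + (∑ i ∈ Finset.Ico 1 b, n/p^i) := by
    simp only [hF, Finset.sum_add_distrib]
  have hall : ∀ i, 1 ≤ i → i < b → G i ≤ F i := by
    intro i _ _
    have := base_ineq n (p^i) (pow_pos hp.pos i)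
    simp only [hG, hF]; omega
  by_cases hp2 : p = 2
  · subst hp2
    have hv : (2*(2*n+1)*(2*n+3)).factorization 2 = 1 := by
      rw [fac_apply_mul (by omega) (by omega), fac_apply_mul (by omega) (by omega),
          Nat.Prime.factorization_self Nat.prime_two,
          Nat.factorization_eq_zero_of_not_dvd (by omega : ¬ 2 ∣ 2*n+1),
          Nat.factorization_eq_zero_of_not_dvd (by omega : ¬ 2 ∣ 2*n+3)]
    set k := Nat.log 2 n with hk
    have hkn : 2^k ≤ n := Nat.pow_log_le_self 2 hn.ne'
    have hkn2 : n < 2^(k+1) := Nat.lt_pow_succ_log_self one_lt_two n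
    have hklen : k ≤ n := (Nat.log_le_self 2 n)
    have hgain : ∀ i, k+2 ≤ i → i < k+3 → G i + 1 ≤ F i := by
      intro i hi1 hi2
      have hieq : i = k + 2 := by omega
      subst hieq
      have h4t : (2:ℕ)^(k+2) = 4*2^k := by ring
      have := gain_two n (2^k) hkn (by omega)
      simp only [hG, hF, h4t]; omega
    have := sum_gain (F := F) (G := G) (b := b) (lo := k+2) (hi := k+3)
      (by omega) (by omega) (by omega) hall hgain
    have hv3 : (3:ℕ).factorization 2 = 0 := Nat.factorization_eq_zero_of_not_dvd (by norm_num)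
    omega
  · have hodd : p % 2 = 1 := Nat.odd_iff.mp (hp.odd_of_ne_two hp2)
    have hp3 : 3 ≤ p := by have := hp.two_le; omega
    have hf2 : (2:ℕ).factorization p = 0 :=
      Nat.factorization_eq_zero_of_not_dvd (fun h => by have := Nat.le_of_dvd (by norm_num) h; omega)
    by_cases hd1 : p ∣ 2*n+1
    · have hnd3 : ¬ p ∣ 2*n+3 := by
        intro h3'
        have h2' : p ∣ 2 := by
          have := Nat.dvd_sub h3' hd1
          simpa using this
        have := Nat.le_of_dvd (by norm_num) h2'; omega
      set a := (2*n+1).factorization p with ha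
      have ha1 : 1 ≤ a := by
        rw [ha]
        have := (Nat.Prime.pow_dvd_iff_le_factorization hp (show 2*n+1 ≠ 0 by omega)).mp
          (by rw [pow_one]; exact hd1)
        simpa using this
      have hab : a ≤ 2*n+1 := fac_le p (2*n+1) hp (by omega)
      have hv : (2*(2*n+1)*(2*n+3)).factorization p = a := by
        rw [fac_apply_mul (by omega) (by omega), fac_apply_mul (by omega) (by omega), hf2,
            Nat.factorization_eq_zero_of_not_dvd hnd3]
        omega
      have hgain : ∀ i, 1 ≤ i → i < a+1 → G i + 1 ≤ F i := by
        intro i hi1 hi2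
        have hdvd : p^i ∣ 2*n+1 := pow_dvd_of_le_fac hp (by omega) (by omega)
        have h3q : 3 ≤ p^i := le_trans hp3 (Nat.le_self_pow (by omega) p)
        have := gain_odd1 n (p^i) (odd_pow_mod p i hodd) h3q hdvd
        simp only [hG, hF]; omega
      have := sum_gain (F := F) (G := G) (b := b) (lo := 1) (hi := a+1)
        (by omega) (by omega) (by omega) hall hgain
      omega
    · by_cases hd3 : p ∣ 2*n+3
      · set c := (2*n+3).factorization p with hc
        have hc1 : 1 ≤ c := by
          rw [hc]
          have := (Nat.Prime.pow_dvd_iff_le_factorization hp (show 2*n+3 ≠ 0 by omega)).mp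
            (by rw [pow_one]; exact hd3)
          simpa using this
        have hcb : c ≤ 2*n+3 := fac_le p (2*n+3) hp (by omega)
        have hv : (2*(2*n+1)*(2*n+3)).factorization p = c := by
          rw [fac_apply_mul (by omega) (by omega), fac_apply_mul (by omega) (by omega), hf2,
              Nat.factorization_eq_zero_of_not_dvd hd1]
          omega
        by_cases hpq3 : p = 3
        · subst hpq3
          have hv3 : (3:ℕ).factorization 3 = 1 := Nat.Prime.factorization_self Nat.prime_three
          have hgain : ∀ i, 2 ≤ i → i < c+1 → G i + 1 ≤ F i := by
            intro i hi1 hi2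
            have hdvd : (3:ℕ)^i ∣ 2*n+3 := pow_dvd_of_le_fac Nat.prime_three (by omega) (by omega)
            have h5q : 5 ≤ (3:ℕ)^i := by
              calc (5:ℕ) ≤ 3^2 := by norm_num
              _ ≤ 3^i := Nat.pow_le_pow_right (by norm_num) hi1
            have := gain_odd3 n (3^i) (odd_pow_mod 3 i hodd) h5q hdvd
            simp only [hG, hF]; omega
          have := sum_gain (F := F) (G := G) (b := b) (lo := 2) (hi := c+1)
            (by omega) (by omega) (by omega) hall hgain
          omega
        · have hp5 : 5 ≤ p := by omega
          have hv3 : (3:ℕ).factorization p = 0 :=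
            Nat.factorization_eq_zero_of_not_dvd
              (fun h => by have := Nat.le_of_dvd (by norm_num) h; omega)
          have hgain : ∀ i, 1 ≤ i → i < c+1 → G i + 1 ≤ F i := by
            intro i hi1 hi2
            have hdvd : p^i ∣ 2*n+3 := pow_dvd_of_le_fac hp (by omega) (by omega)
            have h5q : 5 ≤ p^i := le_trans hp5 (Nat.le_self_pow (by omega) p)
            have := gain_odd3 n (p^i) (odd_pow_mod p i hodd) h5q hdvd
            simp only [hG, hF]; omega
          have := sum_gain (F := F) (G := G) (b := b) (lo := 1) (hi := c+1)
            (by omega) (by omega) (by omega) hall hgain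
          omega
      · have hv : (2*(2*n+1)*(2*n+3)).factorization p = 0 := by
          rw [fac_apply_mul (by omega) (by omega), fac_apply_mul (by omega) (by omega), hf2,
              Nat.factorization_eq_zero_of_not_dvd hd1,
              Nat.factorization_eq_zero_of_not_dvd hd3]
        have := Finset.sum_le_sum (f := G) (g := F) (s := Finset.Ico 1 b)
          (fun i hi => by rw [Finset.mem_Ico] at hi; exact hall i hi.1 hi.2)
        omega

private lemma per_primeB (p n : ℕ) (hp : p.Prime) (hn : 0 < n) :
    (2*(2*n+1)).factorization p + ((3*n)!).factorization p
      + (((2*n)!).factorization p + ((2*n)!).factorization p)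
    ≤ ((6*n)!).factorization p + (n !).factorization p := by
  rw [legendre_sum hp n (3*n) (by omega), legendre_sum hp n (2*n) (by omega),
      legendre_sum hp n (6*n) (by omega), legendre_sum hp n n (by omega)]
  set b := 6*n+1 with hb
  set G : ℕ → ℕ := fun i => 3*n/p^i + (2*n/p^i + 2*n/p^i) with hG
  set F : ℕ → ℕ := fun i => 6*n/p^i + n/p^i with hF
  have hsum1 : ∑ i ∈ Finset.Ico 1 b, G i
      = (∑ i ∈ Finset.Ico 1 b, 3*n/p^i) + ((∑ i ∈ Finset.Ico 1 b, 2*n/p^i) + (∑ i ∈ Finset.Ico 1 b, 2*n/p^i)) := by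
    simp only [hG, Finset.sum_add_distrib]
  have hsum2 : ∑ i ∈ Finset.Ico 1 b, F i
      = (∑ i ∈ Finset.Ico 1 b, 6*n/p^i) + (∑ i ∈ Finset.Ico 1 b, n/p^i) := by
    simp only [hF, Finset.sum_add_distrib]
  have hall : ∀ i, 1 ≤ i → i < b → G i ≤ F i := by
    intro i _ _
    have := base_ineq n (p^i) (pow_pos hp.pos i)
    simp only [hG, hF]; omega
  by_cases hp2 : p = 2
  · subst hp2
    have hv : (2*(2*n+1)).factorization 2 = 1 := by
      rw [fac_apply_mul (by omega) (by omega),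
          Nat.Prime.factorization_self Nat.prime_two,
          Nat.factorization_eq_zero_of_not_dvd (by omega : ¬ 2 ∣ 2*n+1)]
    set k := Nat.log 2 n with hk
    have hkn : 2^k ≤ n := Nat.pow_log_le_self 2 hn.ne'
    have hkn2 : n < 2^(k+1) := Nat.lt_pow_succ_log_self one_lt_two n
    have hklen : k ≤ n := (Nat.log_le_self 2 n)
    have hgain : ∀ i, k+2 ≤ i → i < k+3 → G i + 1 ≤ F i := by
      intro i hi1 hi2
      have hieq : i = k + 2 := by omega
      subst hieq
      have h4t : (2:ℕ)^(k+2) = 4*2^k := by ring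
      have := gain_two n (2^k) hkn (by omega)
      simp only [hG, hF, h4t]; omega
    have := sum_gain (F := F) (G := G) (b := b) (lo := k+2) (hi := k+3)
      (by omega) (by omega) (by omega) hall hgain
    omega
  · have hodd : p % 2 = 1 := Nat.odd_iff.mp (hp.odd_of_ne_two hp2)
    have hp3 : 3 ≤ p := by have := hp.two_le; omega
    have hf2 : (2:ℕ).factorization p = 0 :=
      Nat.factorization_eq_zero_of_not_dvd (fun h => by have := Nat.le_of_dvd (by norm_num) h; omega)
    by_cases hd1 : p ∣ 2*n+1
    · set a := (2*n+1).factorization p with ha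
      have ha1 : 1 ≤ a := by
        rw [ha]
        have := (Nat.Prime.pow_dvd_iff_le_factorization hp (show 2*n+1 ≠ 0 by omega)).mp
          (by rw [pow_one]; exact hd1)
        simpa using this
      have hab : a ≤ 2*n+1 := fac_le p (2*n+1) hp (by omega)
      have hv : (2*(2*n+1)).factorization p = a := by
        rw [fac_apply_mul (by omega) (by omega), hf2]
        omega
      have hgain : ∀ i, 1 ≤ i → i < a+1 → G i + 1 ≤ F i := by
        intro i hi1 hi2
        have hdvd : p^i ∣ 2*n+1 := pow_dvd_of_le_fac hp (by omega) (by omega)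
        have h3q : 3 ≤ p^i := le_trans hp3 (Nat.le_self_pow (by omega) p)
        have := gain_odd1 n (p^i) (odd_pow_mod p i hodd) h3q hdvd
        simp only [hG, hF]; omega
      have := sum_gain (F := F) (G := G) (b := b) (lo := 1) (hi := a+1)
        (by omega) (by omega) (by omega) hall hgain
      omega
    · have hv : (2*(2*n+1)).factorization p = 0 := by
        rw [fac_apply_mul (by omega) (by omega), hf2,
            Nat.factorization_eq_zero_of_not_dvd hd1]
      have := Finset.sum_le_sum (f := G) (g := F) (s := Finset.Ico 1 b)
        (fun i hi => by rw [Finset.mem_Ico] at hi; exact hall i hi.1 hi.2)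
      omega

private lemma dvdB (n : ℕ) (hn : 0 < n) :
    2*(2*n+1) * ((3*n)! * ((2*n)! * (2*n)!)) ∣ (6*n)! * n ! := by
  have hf3 := Nat.factorial_ne_zero (3*n)
  have hf2 := Nat.factorial_ne_zero (2*n)
  have hf6 := Nat.factorial_ne_zero (6*n)
  have hfn := Nat.factorial_ne_zero n
  rw [← Nat.factorization_le_iff_dvd
    (by positivity) (by positivity)]
  rw [Finsupp.le_def]
  intro p
  by_cases hp : p.Prime
  · rw [fac_apply_mul (by positivity) (by positivity), fac_apply_mul hf3 (by positivity),
        fac_apply_mul hf2 hf2, fac_apply_mul hf6 hfn]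
    have := per_primeB p n hp hn
    omega
  · rw [Nat.factorization_eq_zero_of_not_prime _ hp]
    exact Nat.zero_le _

private lemma dvdA (n : ℕ) (hn : 0 < n) :
    2*(2*n+1)*(2*n+3) * ((3*n)! * ((2*n)! * (2*n)!)) ∣ 3 * ((6*n)! * n !) := by
  have hf3 := Nat.factorial_ne_zero (3*n)
  have hf2 := Nat.factorial_ne_zero (2*n)
  have hf6 := Nat.factorial_ne_zero (6*n)
  have hfn := Nat.factorial_ne_zero n
  rw [← Nat.factorization_le_iff_dvd (by positivity) (by positivity)]
  rw [Finsupp.le_def]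
  intro p
  by_cases hp : p.Prime
  · rw [fac_apply_mul (by positivity) (by positivity), fac_apply_mul hf3 (by positivity),
        fac_apply_mul hf2 hf2, fac_apply_mul (show (3:ℕ) ≠ 0 by omega) (by positivity),
        fac_apply_mul hf6 hfn]
    have := per_primeA p n hp hn
    omega
  · rw [Nat.factorization_eq_zero_of_not_prime _ hp]
    exact Nat.zero_le _

theorem guo_divisibility (n : ℕ) (hn : 0 < n) : (2 * n + 3) ∣ 3 * S n := by
  have h1 : Nat.choose (6*n) (3*n) * (3*n)! * (3*n)! = (6*n)! := by
    have := Nat.choose_mul_factorial_mul_factorial (show 3*n ≤ 6*n by omega)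
    rwa [show 6*n - 3*n = 3*n by omega] at this
  have h2 : Nat.choose (3*n) n * n ! * (2*n)! = (3*n)! := by
    have := Nat.choose_mul_factorial_mul_factorial (show n ≤ 3*n by omega)
    rwa [show 3*n - n = 2*n by omega] at this
  have h3 : Nat.choose (2*n) n * n ! * n ! = (2*n)! := by
    have := Nat.choose_mul_factorial_mul_factorial (show n ≤ 2*n by omega)
    rwa [show 2*n - n = n by omega] at this
  set N := Nat.choose (6*n) (3*n) * Nat.choose (3*n) n with hNdef
  set d := 2 * (2*n+1) * Nat.choose (2*n) n with hddef
  set M := (3*n)! * ((2*n)! * (n ! * n !)) with hMdef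
  set DB := 2*(2*n+1) * ((3*n)! * ((2*n)! * (2*n)!)) with hDBdef
  have hMpos : 0 < M := by positivity
  have hDBpos : 0 < DB := by positivity
  have hdpos : 0 < d := by
    have := Nat.choose_pos (show n ≤ 2*n by omega)
    positivity
  obtain ⟨k, hk⟩ := dvdB n hn
  have hNk : N = d * k := by
    apply Nat.eq_of_mul_eq_mul_right hMpos
    have lhs : N * M = (6*n)! * n ! := by
      calc N * M = Nat.choose (6*n) (3*n) * (3*n)! * (Nat.choose (3*n) n * n ! * (2*n)!) * n !
            := by rw [hNdef, hMdef]; ring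
        _ = Nat.choose (6*n) (3*n) * (3*n)! * (3*n)! * n ! := by rw [h2]
        _ = (6*n)! * n ! := by rw [h1]
    have rhs : d * k * M = (6*n)! * n ! := by
      calc d * k * M
          = 2*(2*n+1) * ((3*n)! * ((2*n)! * (Nat.choose (2*n) n * n ! * n !))) * k := by
            rw [hddef, hMdef]; ring
        _ = DB * k := by rw [h3, hDBdef]
        _ = (6*n)! * n ! := hk.symm
    rw [lhs, rhs]
  obtain ⟨m, hm⟩ := dvdA n hn
  have hkey : 3 * k = (2*n+3) * m := by
    apply Nat.eq_of_mul_eq_mul_left hDBpos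
    calc DB * (3 * k) = 3 * (DB * k) := by ring
      _ = 3 * ((6*n)! * n !) := by rw [hk]
      _ = 2*(2*n+1)*(2*n+3) * ((3*n)! * ((2*n)! * (2*n)!)) * m := hm
      _ = DB * ((2*n+3) * m) := by rw [hDBdef]; ring
  have hS : S n = k := by
    unfold S
    rw [← hNdef, ← hddef, hNk, Nat.mul_div_cancel_left k hdpos]
  rw [hS, hkey]
  exact ⟨m, rfl⟩
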